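/- arXiv:1306.3835 — 2 statements merged into one kernel-verified Lean document; each statement's English description precedes it below -/
import Mathlib

section
/- Let t ∈ ℝ and let w(x) = e^{−x³ + t x}. Suppose (p_n)_{n≥0} are monic polynomials with complex coefficients, deg p_n = n, which are orthogonal with respect to w on the contour Γ_0 ∪ Γ_1: I_0(p_m p_n w) + I_1(p_m p_n w) = 0 for all m ≠ n, and h_n := I_0(p_n² w) + I_1(p_n² w) ≠ 0 for all n. Let β_n, g_n be the recurrence coefficients in the three-term recurrence x p_n(x) = p_{n+1}(x) + β_n p_n(x) + g_n p_{n−1}(x) (n ≥ 1), x p_0(x) = p_1(x) + β_0 p_0(x), and set g_0 = 0. Then the string equations hold: g_n + g_{n+1} + β_n² = t/3 for all n ≥ 0, and 3 g_n (β_{n−1} + β_n) = n for all n ≥ 1. -/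
open MeasureTheory Filter Polynomial Asymptotics Topology Set Complex




/-- The primitive third root of unity `ω = exp(2πi/3)`. -/
noncomputable def ω : ℂ := Complex.exp (2 * Real.pi * Complex.I / 3)

/-- Integral over the ray `Γ₀ = [0,∞)`. -/
noncomputable def I0 (f : ℂ → ℂ) : ℂ := ∫ t in Set.Ioi (0 : ℝ), f t

/-- Integral over the ray `Γ₁ = ω·[0,∞)`, oriented towards the origin. -/
noncomputable def I1 (f : ℂ → ℂ) : ℂ := -ω * ∫ t in Set.Ioi (0 : ℝ), f (ω * t)

/-- The weight `w(x) = e^{−x³ + tx}`. -/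
noncomputable def w (t : ℝ) (x : ℂ) : ℂ := Complex.exp (-x ^ 3 + (t : ℂ) * x)


lemma omega_ne : ω ≠ 0 := Complex.exp_ne_zero _
lemma omega_pow3 : ω ^ 3 = 1 := by
  rw [ω, ← Complex.exp_nat_mul]
  push_cast
  have : (3:ℂ) * (2 * Real.pi * Complex.I / 3) = 2 * Real.pi * Complex.I := by ring
  rw [this, Complex.exp_two_pi_mul_I]
lemma omega_norm : ‖ω‖ = 1 := by
  rw [ω, Complex.norm_exp]
  simp [Complex.div_re]

lemma decay (c : ℝ) (k : ℕ) :
    Tendsto (fun s : ℝ => s ^ k * Real.exp (-s ^ 3 + c * s)) atTop (𝓝 0) := by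
  have h := Real.tendsto_pow_mul_exp_neg_atTop_nhds_zero k
  apply squeeze_zero' ?_ ?_ h
  · filter_upwards [eventually_ge_atTop (0:ℝ)] with s hs
    positivity
  · filter_upwards [eventually_ge_atTop (max 1 (|c|+1))] with s hs
    have h1 : (1:ℝ) ≤ s := le_trans (le_max_left _ _) hs
    have h2 : |c| + 1 ≤ s := le_trans (le_max_right _ _) hs
    have hc : c ≤ |c| := le_abs_self c
    have hs0 : (0:ℝ) ≤ s := le_trans zero_le_one h1
    have h3 : c + 1 ≤ s ^ 2 := by nlinarith
    have h4 : 0 ≤ s * (s ^ 2 - (c + 1)) := mul_nonneg hs0 (by linarith)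
    have : -s ^ 3 + c * s ≤ -s := by nlinarith
    exact mul_le_mul_of_nonneg_left (Real.exp_le_exp.2 this) (by positivity)

lemma bound_ev (c : ℝ) (k : ℕ) :
    ∀ᶠ s : ℝ in atTop, s ^ k * Real.exp (-s ^ 3 + c * s) ≤ Real.exp (-s) := by
  have h := (decay (c + 1) k).eventually_le_const zero_lt_one
  filter_upwards [h] with s h1
  have e : s ^ k * Real.exp (-s ^ 3 + c * s)
      = (s ^ k * Real.exp (-s ^ 3 + (c + 1) * s)) * Real.exp (-s) := by
    rw [mul_assoc, ← Real.exp_add]; ring_nf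
  rw [e]
  calc (s ^ k * Real.exp (-s ^ 3 + (c + 1) * s)) * Real.exp (-s)
      ≤ 1 * Real.exp (-s) := mul_le_mul_of_nonneg_right h1 (Real.exp_pos _).le
    _ = Real.exp (-s) := one_mul _

section ray
variable {a : ℂ} (ha : ‖a‖ = 1) (ha3 : a ^ 3 = 1) (t : ℝ)
include ha ha3

lemma norm_mono (k : ℕ) (s : ℝ) (hs : 0 ≤ s) :
    ‖(a * s) ^ k * w t (a * s)‖ = s ^ k * Real.exp (-s ^ 3 + (t * a.re) * s) := by
  have e : (-(a * (s:ℂ)) ^ 3 + (t:ℂ) * (a * s)) = (↑(-s ^ 3) : ℂ) + ↑(t * s) * a := by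
    push_cast
    rw [mul_pow, ha3]
    ring
  rw [norm_mul, norm_pow, norm_mul, ha, Complex.norm_real, w,
    Complex.norm_exp, e]
  simp [Complex.add_re, Complex.mul_re, _root_.abs_of_nonneg hs, ← Complex.ofReal_pow]
  ring_nf
  exact Or.inl trivial

lemma mono_int (k : ℕ) :
    IntegrableOn (fun s : ℝ => (a * s) ^ k * w t (a * s)) (Ioi 0) := by
  set c := t * a.re with hc
  have hcont : Continuous fun s : ℝ => (a * (s:ℂ)) ^ k * w t (a * s) := by
    unfold w; fun_prop
  have hg : IntegrableOn (fun s : ℝ => s ^ k * Real.exp (-s ^ 3 + c * s)) (Ioi 0) := by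
    apply integrable_of_isBigO_exp_neg one_pos
    · fun_prop
    · apply IsBigO.of_bound 1
      filter_upwards [bound_ev c k, eventually_ge_atTop (0:ℝ)] with s h1 h0
      have h2 : (0:ℝ) ≤ s ^ k * Real.exp (-s ^ 3 + c * s) := by positivity
      rw [Real.norm_eq_abs, Real.norm_eq_abs, _root_.abs_of_nonneg h2,
        _root_.abs_of_nonneg (Real.exp_pos _).le, one_mul, neg_one_mul]
      exact h1
  refine hg.mono' (hcont.aestronglyMeasurable.restrict) ?_
  rw [ae_restrict_iff' measurableSet_Ioi]
  filter_upwards with s hs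
  rw [norm_mono ha ha3 t k s hs.le]

lemma mono_tend (k : ℕ) :
    Tendsto (fun s : ℝ => (a * s) ^ k * w t (a * s)) atTop (𝓝 0) := by
  rw [tendsto_zero_iff_norm_tendsto_zero]
  apply Tendsto.congr' _ (decay (t * a.re) k)
  filter_upwards [eventually_ge_atTop (0:ℝ)] with s hs
  rw [norm_mono ha ha3 t k s hs]

omit ha ha3 in
lemma poly_expand (q : Polynomial ℂ) :
    (fun s : ℝ => q.eval (a * s) * w t (a * s))
      = fun s : ℝ => ∑ i ∈ Finset.range (q.natDegree + 1),
          q.coeff i * ((a * s) ^ i * w t (a * s)) := by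
  funext s
  rw [eval_eq_sum_range, Finset.sum_mul]
  simp [mul_assoc]

lemma poly_int (q : Polynomial ℂ) :
    IntegrableOn (fun s : ℝ => q.eval (a * s) * w t (a * s)) (Ioi 0) := by
  rw [poly_expand t q]
  exact integrable_finset_sum _ fun i _ => (mono_int ha ha3 t i).const_mul _

lemma poly_tend (q : Polynomial ℂ) :
    Tendsto (fun s : ℝ => q.eval (a * s) * w t (a * s)) atTop (𝓝 0) := by
  rw [poly_expand t q]
  have := tendsto_finset_sum (Finset.range (q.natDegree + 1))
    (fun i _ => (mono_tend ha ha3 t i).const_mul (q.coeff i))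
  simpa using this

end ray

noncomputable def Dd (t : ℝ) (q : Polynomial ℂ) : Polynomial ℂ :=
  derivative q + (C (t:ℂ) - 3 * X ^ 2) * q

lemma hasDerivF (t : ℝ) (a : ℂ) (q : Polynomial ℂ) (s : ℝ) :
    HasDerivAt (fun s : ℝ => q.eval (a * s) * w t (a * s))
      (a * ((Dd t q).eval (a * s) * w t (a * s))) s := by
  have key : ∀ z : ℂ, HasDerivAt (fun z : ℂ => q.eval (a * z) * w t (a * z))
      (a * ((Dd t q).eval (a * z) * w t (a * z))) z := by
    intro z
    have hu : HasDerivAt (fun z : ℂ => a * z) a z := by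
      simpa using (hasDerivAt_id z).const_mul a
    have h1 : HasDerivAt (fun z : ℂ => q.eval (a * z)) (q.derivative.eval (a * z) * a) z :=
      HasDerivAt.comp z (q.hasDerivAt (a * z)) hu
    have hg : HasDerivAt (fun y : ℂ => -y ^ 3 + (t:ℂ) * y)
        (-(3 * (a * z) ^ 2) + t) (a * z) := by
      have h3 : HasDerivAt (fun y : ℂ => y ^ 3) (3 * (a * z) ^ 2) (a * z) := by
        simpa using hasDerivAt_pow 3 (a * z)
      exact (h3.neg.add ((hasDerivAt_id (a * z)).const_mul (t:ℂ))).congr_deriv (by simp)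
    have h2 : HasDerivAt (fun z : ℂ => w t (a * z))
        (w t (a * z) * ((-(3 * (a * z) ^ 2) + t) * a)) z := by
      have := (HasDerivAt.comp z hg hu).cexp
      simpa [w, mul_comm] using this
    have hm : HasDerivAt (fun z : ℂ => q.eval (a * z) * w t (a * z))
        (q.derivative.eval (a * z) * a * w t (a * z)
          + q.eval (a * z) * (w t (a * z) * ((-(3 * (a * z) ^ 2) + t) * a))) z := h1.mul h2
    convert hm using 1
    simp only [Dd, w, eval_add, eval_mul, eval_sub, eval_C, eval_pow, eval_X,
      Polynomial.eval_ofNat]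
    ring
  exact (key s).comp_ofReal

lemma ibp {a : ℂ} (ha : ‖a‖ = 1) (ha3 : a ^ 3 = 1) (ha0 : a ≠ 0) (t : ℝ) (q : Polynomial ℂ) :
    ∫ s in Ioi (0:ℝ), ((Dd t q).eval (a * s) * w t (a * s)) = -(q.eval 0) / a := by
  have hcont : Continuous fun s : ℝ => q.eval (a * (s:ℂ)) * w t (a * s) := by
    unfold w; fun_prop
  have h := integral_Ioi_of_hasDerivAt_of_tendsto (a := (0:ℝ)) (m := 0)
      (f := fun s : ℝ => q.eval (a * s) * w t (a * s))
      (f' := fun s : ℝ => a * ((Dd t q).eval (a * s) * w t (a * s)))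
      hcont.continuousWithinAt (fun x _ => hasDerivF t a q x)
      ((poly_int ha ha3 t (Dd t q)).const_mul a) (poly_tend ha ha3 t q)
  rw [MeasureTheory.integral_const_mul] at h
  have hw0 : w t (a * ((0:ℝ):ℂ)) = 1 := by simp [w]
  simp only [Complex.ofReal_zero, mul_zero, zero_sub] at h hw0
  rw [hw0, mul_one] at h
  field_simp
  linear_combination h

noncomputable def L (t : ℝ) (q : Polynomial ℂ) : ℂ :=
  I0 (fun x => q.eval x * w t x) + I1 (fun x => q.eval x * w t x)

lemma cnorm_one : ‖(1:ℂ)‖ = 1 := by simp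
lemma one_pow3 : (1:ℂ) ^ 3 = 1 := one_pow 3

lemma L_eq (t : ℝ) (q : Polynomial ℂ) :
    L t q = (∫ s in Ioi (0:ℝ), q.eval (1 * (s:ℂ)) * w t (1 * s))
      + (-ω) * ∫ s in Ioi (0:ℝ), q.eval (ω * s) * w t (ω * s) := by
  simp only [L, I0, I1, one_mul]

lemma L_zero (t : ℝ) : L t 0 = 0 := by simp [L, I0, I1]

lemma L_add (t : ℝ) (q r : Polynomial ℂ) : L t (q + r) = L t q + L t r := by
  have key : ∀ a : ℂ, ‖a‖ = 1 → a ^ 3 = 1 →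
      (∫ s in Ioi (0:ℝ), (q + r).eval (a * s) * w t (a * s))
        = (∫ s in Ioi (0:ℝ), q.eval (a * s) * w t (a * s))
          + ∫ s in Ioi (0:ℝ), r.eval (a * s) * w t (a * s) := by
    intro a ha ha3
    rw [← integral_add (poly_int ha ha3 t q) (poly_int ha ha3 t r)]
    congr 1
    funext s
    simp only [eval_add]
    ring
  rw [L_eq, L_eq, L_eq, key 1 cnorm_one one_pow3, key ω omega_norm omega_pow3]
  ring

lemma L_smul (t : ℝ) (c : ℂ) (q : Polynomial ℂ) : L t (C c * q) = c * L t q := by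
  rw [L_eq, L_eq]
  simp only [eval_mul, eval_C, mul_assoc]
  rw [MeasureTheory.integral_const_mul, MeasureTheory.integral_const_mul]
  ring

lemma L_D (t : ℝ) (q : Polynomial ℂ) : L t (Dd t q) = 0 := by
  rw [L_eq, ibp cnorm_one one_pow3 one_ne_zero t q, ibp omega_norm omega_pow3 omega_ne t q]
  have : -ω * (-eval 0 q / ω) = eval 0 q := by
    field_simp
    rw [mul_comm]
    exact mul_div_cancel_right₀ _ omega_ne
  rw [this]
  ring

/-- **string equations for the weight `e^{−x³+tx}`.** If `pₙ` are
monic polynomials, `deg pₙ = n`, orthogonal with respect to `w` on `Γ₀ ∪ Γ₁`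
with nonzero norms `hₙ`, and `βₙ`, `gₙ` are the three-term recurrence
coefficients (with `g₀ = 0`), then `gₙ + g_{n+1} + βₙ² = t/3` for `n ≥ 0` and
`3 gₙ (β_{n−1} + βₙ) = n` for `n ≥ 1`. -/
theorem stmt18 (t : ℝ) (p : ℕ → Polynomial ℂ) (β g : ℕ → ℂ)
    (hmonic : ∀ n : ℕ, (p n).Monic) (hdeg : ∀ n : ℕ, (p n).natDegree = n)
    (horth : ∀ m n : ℕ, m ≠ n →
      I0 (fun x => (p m).eval x * (p n).eval x * w t x) +
        I1 (fun x => (p m).eval x * (p n).eval x * w t x) = 0)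
    (hnorm : ∀ n : ℕ,
      I0 (fun x => ((p n).eval x) ^ 2 * w t x) +
        I1 (fun x => ((p n).eval x) ^ 2 * w t x) ≠ 0)
    (hrec : ∀ n : ℕ, 1 ≤ n → ∀ x : ℂ,
      x * (p n).eval x = (p (n + 1)).eval x + β n * (p n).eval x + g n * (p (n - 1)).eval x)
    (hrec0 : ∀ x : ℂ, x * (p 0).eval x = (p 1).eval x + β 0 * (p 0).eval x)
    (hg0 : g 0 = 0) :
    (∀ n : ℕ, g n + g (n + 1) + (β n) ^ 2 = (t : ℂ) / 3) ∧
    (∀ n : ℕ, 1 ≤ n → 3 * g n * (β (n - 1) + β n) = (n : ℂ)) := by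
  have horth' : ∀ m n : ℕ, m ≠ n → L t (p m * p n) = 0 := by
    intro m n h
    have := horth m n h
    simpa only [L, eval_mul] using this
  have hnorm' : ∀ n : ℕ, L t (p n * p n) ≠ 0 := by
    intro n
    have h := hnorm n
    simp only [pow_two] at h
    simpa only [L, eval_mul] using h
  have hdegn : ∀ n : ℕ, (p n).degree = (n : WithBot ℕ) := fun n => by
    rw [degree_eq_natDegree (hmonic n).ne_zero, hdeg n]
  -- orthogonality to all lower-degree polynomials
  have Lorth : ∀ (N : ℕ) (r : Polynomial ℂ), r.natDegree < N → ∀ n : ℕ,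
      r.degree < (n : WithBot ℕ) → L t (p n * r) = 0 := by
    intro N
    induction N with
    | zero => intro r hr; exact absurd hr (Nat.not_lt_zero _)
    | succ N ih =>
      intro r hr n hd
      by_cases h0 : r = 0
      · rw [h0, mul_zero, L_zero]
      · set m := r.natDegree with hm
        have hmn : m < n := by
          rw [hm, Polynomial.natDegree_lt_iff_degree_lt h0]
          exact_mod_cast hd
        have hlc : r.leadingCoeff ≠ 0 := leadingCoeff_ne_zero.2 h0
        set r' := r - C r.leadingCoeff * p m with hr'
        have hd' : r'.degree < (m : WithBot ℕ) := by
          have e1 : r.degree = (C r.leadingCoeff * p m).degree := by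
            rw [degree_mul, degree_C hlc, zero_add, hdegn m, degree_eq_natDegree h0]
          have h2 := degree_sub_lt e1 h0
            (by rw [leadingCoeff_mul, leadingCoeff_C, (hmonic m).leadingCoeff, mul_one])
          rwa [degree_eq_natDegree h0, ← hm] at h2
        have hnr' : L t (p n * r') = 0 := by
          by_cases h0' : r' = 0
          · rw [h0', mul_zero, L_zero]
          · refine ih r' ?_ n (hd'.trans ?_)
            · have : r'.natDegree < m := by
                rwa [Polynomial.natDegree_lt_iff_degree_lt h0']
              omega
            · exact_mod_cast Nat.cast_lt.2 hmn
        have hsplit : p n * r = C r.leadingCoeff * (p n * p m) + p n * r' := by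
          rw [hr']; ring
        rw [hsplit, L_add, L_smul, horth' n m (by omega), mul_zero, zero_add, hnr']
  have LorthD : ∀ (n : ℕ) (r : Polynomial ℂ), r.degree < (n : WithBot ℕ) →
      L t (p n * r) = 0 := fun n r h => Lorth (r.natDegree + 1) r (by omega) n h
  -- the three-term recurrence as a polynomial identity
  have hP : ∀ n : ℕ, (X : Polynomial ℂ) * p n
      = p (n + 1) + C (β n) * p n + C (g n) * p (n - 1) := by
    intro n
    apply Polynomial.funext
    intro x
    simp only [eval_add, eval_mul, eval_X, eval_C]
    cases n with
    | zero => simpa [hg0] using hrec0 x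
    | succ k => exact hrec (k + 1) (by omega) x
  have Lexp : ∀ n m : ℕ, L t (p n * ((X : Polynomial ℂ) * p m))
      = L t (p n * p (m + 1)) + β m * L t (p n * p m) + g m * L t (p n * p (m - 1)) := by
    intro n m
    have e : p n * ((X : Polynomial ℂ) * p m)
        = p n * p (m + 1) + (C (β m) * (p n * p m) + C (g m) * (p n * p (m - 1))) := by
      conv_lhs => rw [hP m]
      ring
    rw [e, L_add, L_add, L_smul, L_smul]
    ring
  -- values of L on products with X
  have V1 : ∀ n : ℕ, L t (p n * ((X : Polynomial ℂ) * p n)) = β n * L t (p n * p n) := by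
    intro n
    rw [Lexp]
    cases n with
    | zero => rw [horth' 0 1 (by omega), hg0]; ring
    | succ k =>
      rw [horth' (k + 1) (k + 2) (by omega), show k + 1 - 1 = k from rfl,
        horth' (k + 1) k (by omega)]
      ring
  have V2 : ∀ n : ℕ, L t (p n * ((X : Polynomial ℂ) * p (n + 1)))
      = g (n + 1) * L t (p n * p n) := by
    intro n
    rw [Lexp, horth' n (n + 2) (by omega), horth' n (n + 1) (by omega),
      show n + 1 - 1 = n from rfl]
    ring
  have V3 : ∀ n : ℕ, L t (p (n + 1) * ((X : Polynomial ℂ) * p n))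
      = L t (p (n + 1) * p (n + 1)) := by
    intro n
    rw [Lexp, horth' (n + 1) n (by omega), horth' (n + 1) (n - 1) (by omega)]
    ring
  have hh : ∀ n : ℕ, L t (p (n + 1) * p (n + 1)) = g (n + 1) * L t (p n * p n) := by
    intro n
    rw [← V3 n, show p (n + 1) * ((X : Polynomial ℂ) * p n)
      = p n * ((X : Polynomial ℂ) * p (n + 1)) from by ring, V2]
  have Lexp2 : ∀ n m : ℕ, L t (p n * ((X : Polynomial ℂ) * ((X : Polynomial ℂ) * p m)))
      = L t (p n * ((X : Polynomial ℂ) * p (m + 1)))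
        + β m * L t (p n * ((X : Polynomial ℂ) * p m))
        + g m * L t (p n * ((X : Polynomial ℂ) * p (m - 1))) := by
    intro n m
    have e : p n * ((X : Polynomial ℂ) * ((X : Polynomial ℂ) * p m))
        = p n * ((X : Polynomial ℂ) * p (m + 1))
          + (C (β m) * (p n * ((X : Polynomial ℂ) * p m))
            + C (g m) * (p n * ((X : Polynomial ℂ) * p (m - 1)))) := by
      conv_lhs => rw [hP m]
      ring
    rw [e, L_add, L_add, L_smul, L_smul]
    ring
  have V4 : ∀ n : ℕ, L t (p n * ((X : Polynomial ℂ) * ((X : Polynomial ℂ) * p n)))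
      = (g n + g (n + 1) + β n ^ 2) * L t (p n * p n) := by
    intro n
    rw [Lexp2, V2, V1]
    cases n with
    | zero => rw [hg0]; ring
    | succ k =>
      rw [show k + 1 - 1 = k from rfl, V3, hh]
      ring
  have V5 : ∀ k : ℕ, L t (p (k + 1) * ((X : Polynomial ℂ) * ((X : Polynomial ℂ) * p k)))
      = (β k + β (k + 1)) * L t (p (k + 1) * p (k + 1)) := by
    intro k
    rw [Lexp2, V1, V3]
    have hz : g k * L t (p (k + 1) * ((X : Polynomial ℂ) * p (k - 1))) = 0 := by
      cases k with
      | zero => rw [hg0]; ring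
      | succ j =>
        rw [show j + 1 - 1 = j from rfl, Lexp, horth' (j + 2) (j + 1) (by omega),
          horth' (j + 2) j (by omega), horth' (j + 2) (j - 1) (by omega)]
        ring
    rw [hz]
    ring
  -- derivative values
  have Dzero : ∀ n : ℕ, L t (p n * derivative (p n)) = 0 := by
    intro n
    refine LorthD n _ ?_
    rw [← hdegn n]
    exact degree_derivative_lt (hmonic n).ne_zero
  have Dmix : ∀ k : ℕ, L t (p k * derivative (p (k + 1)))
      = ((k : ℂ) + 1) * L t (p k * p k) := by
    intro k
    set r := derivative (p (k + 1)) - C ((k : ℂ) + 1) * p k with hr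
    have hdr : r.degree < (k : WithBot ℕ) := by
      rw [Polynomial.degree_lt_iff_coeff_zero]
      intro m hm
      have hkm : k ≤ m := by exact_mod_cast hm
      rw [hr, coeff_sub, coeff_derivative, coeff_C_mul]
      rcases eq_or_lt_of_le hkm with h | h
      · subst h
        have e1 : (p (k + 1)).coeff (k + 1) = 1 := by
          have := (hmonic (k + 1)).coeff_natDegree
          rwa [hdeg (k + 1)] at this
        have e2 : (p k).coeff k = 1 := by
          have := (hmonic k).coeff_natDegree
          rwa [hdeg k] at this
        rw [e1, e2]
        ring
      · have e1 : (p (k + 1)).coeff (m + 1) = 0 :=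
          coeff_eq_zero_of_natDegree_lt (by rw [hdeg]; omega)
        have e2 : (p k).coeff m = 0 :=
          coeff_eq_zero_of_natDegree_lt (by rw [hdeg]; omega)
        rw [e1, e2]
        ring
    have hsplit : p k * derivative (p (k + 1))
        = C ((k : ℂ) + 1) * (p k * p k) + p k * r := by
      rw [hr]; ring
    rw [hsplit, L_add, L_smul, LorthD k r hdr, add_zero]
  -- the integration-by-parts identity
  have LD0 : ∀ q : Polynomial ℂ, L t (derivative q) + (t : ℂ) * L t q
      - 3 * L t ((X : Polynomial ℂ) * ((X : Polynomial ℂ) * q)) = 0 := by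
    intro q
    have e : Dd t q = derivative q + (C (t : ℂ) * q
        + C (-3) * ((X : Polynomial ℂ) * ((X : Polynomial ℂ) * q))) := by
      rw [Dd, map_neg, map_ofNat]; ring
    have h := L_D t q
    rw [e, L_add, L_add, L_smul, L_smul] at h
    linear_combination h
  constructor
  · intro n
    have h := LD0 (p n * p n)
    have e1 : derivative (p n * p n) = p n * derivative (p n) + p n * derivative (p n) := by
      rw [derivative_mul]; ring
    have e2 : (X : Polynomial ℂ) * ((X : Polynomial ℂ) * (p n * p n))
        = p n * ((X : Polynomial ℂ) * ((X : Polynomial ℂ) * p n)) := by ring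
    rw [e1, e2, L_add, Dzero, V4] at h
    have h2 : ((t : ℂ) - 3 * (g n + g (n + 1) + β n ^ 2)) * L t (p n * p n) = 0 := by
      linear_combination h
    rcases mul_eq_zero.1 h2 with h3 | h3
    · linear_combination -h3 / 3
    · exact absurd h3 (hnorm' n)
  · intro n hn
    obtain ⟨k, rfl⟩ : ∃ k, n = k + 1 := ⟨n - 1, by omega⟩
    have h := LD0 (p (k + 1) * p k)
    have e1 : derivative (p (k + 1) * p k)
        = p k * derivative (p (k + 1)) + p (k + 1) * derivative (p k) := by
      rw [derivative_mul]; ring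
    have e2 : (X : Polynomial ℂ) * ((X : Polynomial ℂ) * (p (k + 1) * p k))
        = p (k + 1) * ((X : Polynomial ℂ) * ((X : Polynomial ℂ) * p k)) := by ring
    have hz2 : L t (p (k + 1) * derivative (p k)) = 0 := by
      refine LorthD (k + 1) _ ?_
      calc (derivative (p k)).degree < (p k).degree := degree_derivative_lt (hmonic k).ne_zero
        _ = (k : WithBot ℕ) := hdegn k
        _ < ((k + 1 : ℕ) : WithBot ℕ) := by exact_mod_cast Nat.lt_succ_self k
    rw [e1, e2, L_add, Dmix, hz2, V5, hh, horth' (k + 1) k (by omega)] at h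
    have h2 : (((k : ℂ) + 1) - 3 * g (k + 1) * (β k + β (k + 1))) * L t (p k * p k) = 0 := by
      linear_combination h
    rcases mul_eq_zero.1 h2 with h3 | h3
    · rw [show k + 1 - 1 = k from rfl]
      push_cast
      linear_combination -h3
    · exact absurd h3 (hnorm' k)
end

section
/- For each n ∈ ℕ let β_n : ℝ → ℂ and g_n : ℝ → ℂ be differentiable functions with g_0 ≡ 0, satisfying for all t ∈ ℝ the Toda equations g_n'(t) = g_n(t)(β_n(t) − β_{n−1}(t)) for n ≥ 1 and β_n'(t) = g_{n+1}(t) − g_n(t) for n ≥ 0, together with the string equations g_n(t) + g_{n+1}(t) + β_n(t)² = t/3 for n ≥ 0 and 3 g_n(t)(β_{n−1}(t) + β_n(t)) = n for n ≥ 1. Then each β_n is twice differentiable and satisfies the Painlevé II equation β_n''(t) = 2 β_n(t)³ − (2t/3) β_n(t) + (2n+1)/3. -/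
/-- **Painlevé II.** If differentiable functions `βₙ, gₙ : ℝ → ℂ`
(with `g₀ ≡ 0`) satisfy the Toda equations `gₙ' = gₙ(βₙ − β_{n−1})` (n ≥ 1),
`βₙ' = g_{n+1} − gₙ` (n ≥ 0), and the string equations
`gₙ + g_{n+1} + βₙ² = t/3` (n ≥ 0), `3gₙ(β_{n−1} + βₙ) = n` (n ≥ 1), then each
`βₙ` is twice differentiable and satisfies the Painlevé II equation
`βₙ'' = 2βₙ³ − (2t/3)βₙ + (2n+1)/3`. -/
theorem stmt19 (β g : ℕ → ℝ → ℂ)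
    (hβdiff : ∀ n : ℕ, Differentiable ℝ (β n))
    (hgdiff : ∀ n : ℕ, Differentiable ℝ (g n))
    (hg0 : ∀ t : ℝ, g 0 t = 0)
    (hToda1 : ∀ n : ℕ, 1 ≤ n → ∀ t : ℝ,
      deriv (g n) t = g n t * (β n t - β (n - 1) t))
    (hToda2 : ∀ n : ℕ, ∀ t : ℝ, deriv (β n) t = g (n + 1) t - g n t)
    (hstring1 : ∀ n : ℕ, ∀ t : ℝ, g n t + g (n + 1) t + (β n t) ^ 2 = (t : ℂ) / 3)
    (hstring2 : ∀ n : ℕ, 1 ≤ n → ∀ t : ℝ, 3 * g n t * (β (n - 1) t + β n t) = (n : ℂ)) :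
    (∀ n : ℕ, Differentiable ℝ (deriv (β n))) ∧
    (∀ n : ℕ, ∀ t : ℝ,
      deriv (deriv (β n)) t =
        2 * (β n t) ^ 3 - (2 * (t : ℂ) / 3) * β n t + (2 * (n : ℂ) + 1) / 3) := by
  have hderiv : ∀ n : ℕ, deriv (β n) = fun t => g (n + 1) t - g n t := by
    intro n; funext t; exact hToda2 n t
  have hdd : ∀ n : ℕ, Differentiable ℝ (deriv (β n)) := by
    intro n; rw [hderiv]; exact (hgdiff (n + 1)).sub (hgdiff n)
  refine ⟨hdd, ?_⟩
  intro n t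
  -- key: deriv (g n) t = 2 g_n β_n - n/3
  have key : ∀ m : ℕ, deriv (g m) t = 2 * g m t * β m t - (m : ℂ) / 3 := by
    intro m
    cases m with
    | zero =>
        have : g 0 = fun _ => (0 : ℂ) := funext hg0
        rw [this]
        simp [hg0]
    | succ k =>
        have h1 := hToda1 (k + 1) (by omega) t
        have h2 := hstring2 (k + 1) (by omega) t
        simp only [Nat.add_sub_cancel] at h1 h2
        push_cast at h2 ⊢
        linear_combination h1 - (1/3 : ℂ) * h2
  -- key': deriv (g (m+1)) t = (m+1)/3 - 2 g_{m+1} β_m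
  have key' : ∀ m : ℕ, deriv (g (m + 1)) t
      = ((m : ℂ) + 1) / 3 - 2 * g (m + 1) t * β m t := by
    intro m
    have h1 := hToda1 (m + 1) (by omega) t
    have h2 := hstring2 (m + 1) (by omega) t
    simp only [Nat.add_sub_cancel] at h1 h2
    push_cast at h2 ⊢
    linear_combination h1 + (1/3 : ℂ) * h2
  have hsplit : deriv (deriv (β n)) t = deriv (g (n + 1)) t - deriv (g n) t := by
    rw [hderiv]
    exact deriv_sub ((hgdiff (n + 1)) t) ((hgdiff n) t)
  rw [hsplit, key' n, key n]
  have hs1 := hstring1 n t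
  linear_combination (-2 * β n t) * hs1
end
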